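/- Let δ(j) = log Q(j,ℤ₊) and δ⁻ = max(−δ,0). Suppose: (i) ∑_{i=0}^∞ δ⁻(i) < ∞; (ii) for every fixed N, P_i{Xₙ > N for all n ≥ 0} → 1 as i → ∞; (iii) sup_{i∈ℤ₊} E_i ℓ(i) < ∞, where ℓ(j) = ∑_{n=0}^∞ 1{Xₙ = j} is the local time at j. Then liminf_{i→∞} f(i) ≥ 1, and in particular inf_{i∈ℤ₊} f(i) > 0, where f(i) = E_i ∏_{n=0}^∞ Q(Xₙ,ℤ₊). -/

import Mathlib

open MeasureTheory Filter Topology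
open scoped ENNReal NNReal

structure MC where
  μ : ℕ → Measure (ℕ → ℕ)
  prob : ∀ i, IsProbabilityMeasure (μ i)
  start : ∀ i, μ i {ω | ω 0 = i} = 1
  P : ℕ → ℕ → ℝ≥0∞
  P_sum : ∀ i, ∑' j, P i j = 1
  markov : ∀ i, (μ i).map (fun ω n => ω (n + 1)) = Measure.sum fun j => P i j • μ j

noncomputable def qt (Q : ℕ → ℕ → ℝ≥0∞) (i : ℕ) : ℝ≥0∞ := ∑' j, Q i j

noncomputable def fQ (Q : ℕ → ℕ → ℝ≥0∞) (X : MC) (i : ℕ) : ℝ≥0∞ :=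
  ∫⁻ ω, ∏' n, qt Q (ω n) ∂(X.μ i)

def condC (Q : ℕ → ℕ → ℝ≥0∞) (X : MC) : Prop :=
  ∀ i, (∫⁻ ω, ∏' n, max (qt Q (ω n)) 1 ∂(X.μ i)) < ∞

noncomputable def Qpow (Q : ℕ → ℕ → ℝ≥0∞) : ℕ → ℕ → ℕ → ℝ≥0∞
  | 0 => fun i j => if i = j then 1 else 0
  | n + 1 => fun i j => ∑' k, Q i k * Qpow Q n k j

def Irred (Q : ℕ → ℕ → ℝ≥0∞) : Prop := ∀ i j, ∃ n, 0 < Qpow Q n i j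

noncomputable def locTime (j : ℕ) (ω : ℕ → ℕ) : ℝ≥0∞ := ∑' n, if ω n = j then 1 else 0

noncomputable def locExp (γ : ℝ) (j : ℕ) (ω : ℕ → ℕ) : ℝ≥0∞ :=
  ∏' n, if ω n = j then ENNReal.ofReal (Real.exp γ) else 1

noncomputable def deltaQ (Q : ℕ → ℕ → ℝ≥0∞) (j : ℕ) : ℝ := Real.log (qt Q j).toReal

noncomputable def jumpP (X : MC) (i : ℕ) (j : ℤ) : ℝ≥0∞ :=
  if 0 ≤ (i : ℤ) + j then X.P i ((i : ℤ) + j).toNat else 0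

noncomputable def dmp (Q : ℕ → ℕ → ℝ≥0∞) (j : ℕ) : ℝ≥0∞ := 1 - min (qt Q j) 1
noncomputable def uu (X : MC) (n i j : ℕ) : ℝ≥0∞ := X.μ i {ω | ω n = j}
noncomputable def GG (X : MC) (i j : ℕ) : ℝ≥0∞ := ∑' n, uu X n i j
noncomputable def fp (X : MC) : ℕ → ℕ → ℕ → ℝ≥0∞
  | 0 => fun _ _ => 0
  | 1 => fun i j => X.P i j
  | (m+2) => fun i j => ∑' k, if k = j then 0 else X.P i k * fp X (m+1) k j
noncomputable def FF (X : MC) (i j : ℕ) : ℝ≥0∞ := ∑' m, fp X m i j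
def Bset (j m : ℕ) : Set (ℕ → ℕ) := {ω | ω (m+1) = j ∧ ∀ l, 1 ≤ l → l ≤ m → ω l ≠ j}

section basic
variable (X : MC)

lemma shift_meas : Measurable (fun ω : ℕ → ℕ => fun n => ω (n+1)) :=
  measurable_pi_lambda _ (fun n => measurable_pi_apply (n+1))

lemma coordSet_meas (n j : ℕ) : MeasurableSet {ω : ℕ → ℕ | ω n = j} :=
  by
  have h : {ω : ℕ → ℕ | ω n = j} = (fun ω : ℕ → ℕ => ω n) ⁻¹' {j} := rfl
  rw [h]; exact (measurable_pi_apply n) (measurableSet_singleton j)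

lemma markov_apply (i : ℕ) {B : Set (ℕ → ℕ)} (hB : MeasurableSet B) :
    X.μ i ((fun ω n => ω (n+1)) ⁻¹' B) = ∑' k, X.P i k * X.μ k B := by
  rw [← Measure.map_apply (shift_meas) hB, X.markov i, Measure.sum_apply _ hB]
  simp [smul_eq_mul]

lemma ae_start (i : ℕ) : ∀ᵐ ω ∂ X.μ i, ω 0 = i := by
  have h := X.prob i
  rw [ae_iff]
  have : {ω : ℕ → ℕ | ¬ ω 0 = i} = {ω : ℕ → ℕ | ω 0 = i}ᶜ := rfl
  rw [this, prob_compl_eq_one_sub (coordSet_meas 0 i), X.start i]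
  simp

lemma uu_zero (i j : ℕ) : uu X 0 i j = if i = j then 1 else 0 := by
  by_cases h : i = j
  · subst h; simp [uu, X.start i]
  · simp only [uu, if_neg h]
    have hsub : {ω : ℕ → ℕ | ω 0 = j} ⊆ {ω : ℕ → ℕ | ω 0 = i}ᶜ := by
      intro ω hω hωi
      exact h ((hωi.symm.trans hω).symm ▸ rfl)
    refine measure_mono_null hsub ?_
    have := X.prob i
    rw [prob_compl_eq_one_sub (coordSet_meas 0 i), X.start i]
    simp

lemma uu_succ (n i j : ℕ) : uu X (n+1) i j = ∑' k, X.P i k * uu X n k j := by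
  have : {ω : ℕ → ℕ | ω (n+1) = j} = (fun ω m => ω (m+1)) ⁻¹' {ω | ω n = j} := rfl
  rw [uu, this, markov_apply X i (coordSet_meas n j)]
  rfl

lemma fp_two (m i j : ℕ) : fp X (m+2) i j = ∑' k, if k = j then 0 else X.P i k * fp X (m+1) k j := rfl

lemma uu_decomp (n : ℕ) : ∀ i j, uu X n i j =
    (if n = 0 then (if i = j then 1 else 0) else 0)
      + ∑ m ∈ Finset.range (n+1), fp X m i j * uu X (n-m) j j := by
  induction n with
  | zero =>
    intro i j
    simp [uu_zero, fp]
  | succ n ih =>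
    intro i j
    rw [uu_succ]
    have hterm : ∀ k, X.P i k * uu X n k j
        = X.P i k * (if n = 0 then (if k = j then 1 else 0) else 0)
          + ∑ m ∈ Finset.range (n+1), X.P i k * (fp X m k j * uu X (n-m) j j) := by
      intro k
      rw [ih k j, mul_add, Finset.mul_sum]
    calc ∑' k, X.P i k * uu X n k j
        = (∑' k, X.P i k * (if n = 0 then (if k = j then 1 else 0) else 0))
          + ∑' k, ∑ m ∈ Finset.range (n+1), X.P i k * (fp X m k j * uu X (n-m) j j) := by
          simp_rw [hterm]; rw [ENNReal.tsum_add]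
      _ = (if n = 0 then X.P i j else 0)
          + ∑ m ∈ Finset.range (n+1), ∑' k, X.P i k * (fp X m k j * uu X (n-m) j j) := by
          congr 1
          · by_cases hn : n = 0
            · subst hn
              simp only [if_true]
              rw [tsum_eq_single j]
              · simp
              · intro k hk; simp [hk]
            · simp [hn]
          · exact Summable.tsum_finsetSum (fun m _ => ENNReal.summable)
      _ = (if n = 0 then X.P i j else 0)
          + ∑ m ∈ Finset.range (n+1), (∑' k, X.P i k * fp X m k j) * uu X (n-m) j j := by
          congr 1
          refine Finset.sum_congr rfl (fun m _ => ?_)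
          rw [← ENNReal.tsum_mul_right]
          simp_rw [mul_assoc]
      _ = (if n + 1 = 0 then (if i = j then 1 else 0) else 0)
          + ∑ m ∈ Finset.range (n+1+1), fp X m i j * uu X (n+1-m) j j := by
          have hfp0 : ∀ a b : ℕ, fp X 0 a b = 0 := fun _ _ => rfl
          have hfp1 : ∀ a b : ℕ, fp X 1 a b = X.P a b := fun _ _ => rfl
          rw [Finset.sum_range_succ' (fun m => fp X m i j * uu X (n+1-m) j j) (n+1),
              Finset.sum_range_succ' (fun m => fp X (m+1) i j * uu X (n+1-(m+1)) j j) n]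
          have hidx : ∀ m : ℕ, n + 1 - (m + 1 + 1) = n - (m+1) := by intro m; omega
          have hidx2 : n + 1 - (0+1) = n := by omega
          simp only [hfp0, zero_mul, add_zero, hfp1, hidx, hidx2]
          rw [Finset.sum_range_succ' (fun m => (∑' k, X.P i k * fp X m k j) * uu X (n-m) j j) n]
          have hA0 : (∑' k, X.P i k * fp X 0 k j) * uu X (n-0) j j = 0 := by
            simp [hfp0]
          rw [hA0, add_zero]
          have hAm : ∀ m, (∑' k, X.P i k * fp X (m+1) k j)
              = X.P i j * fp X (m+1) j j + fp X (m+2) i j := by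
            intro m
            rw [ENNReal.tsum_eq_add_tsum_ite j]
            congr 1
            rw [fp_two]
            apply tsum_congr
            intro b
            congr
          have hsplit : ∑ m ∈ Finset.range n, (∑' k, X.P i k * fp X (m+1) k j) * uu X (n-(m+1)) j j
              = ∑ m ∈ Finset.range n, (X.P i j * (fp X (m+1) j j * uu X (n-(m+1)) j j))
                + ∑ m ∈ Finset.range n, fp X (m+2) i j * uu X (n-(m+1)) j j := by
            rw [← Finset.sum_add_distrib]
            refine Finset.sum_congr rfl (fun m _ => ?_)
            rw [hAm m, add_mul, mul_assoc]
          rw [hsplit, ← Finset.mul_sum]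
          have hIH : X.P i j * uu X n j j
              = (if n = 0 then X.P i j else 0)
                + X.P i j * ∑ m ∈ Finset.range n, fp X (m+1) j j * uu X (n-(m+1)) j j := by
            conv_lhs => rw [ih j j]
            rw [Finset.sum_range_succ' (fun m => fp X m j j * uu X (n-m) j j) n]
            simp only [hfp0, zero_mul, add_zero]
            rw [mul_add]
            congr 1
            by_cases hn : n = 0 <;> simp [hn]
          have hn1 : (if n + 1 = 0 then (if i = j then (1:ℝ≥0∞) else 0) else 0) = 0 := by simp
          rw [hn1, zero_add, hIH]
          ring
lemma cauchy_finite (a b : ℕ → ℝ≥0∞) (L : ℕ) :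
    ∑ n ∈ Finset.range L, ∑ m ∈ Finset.range (n+1), a m * b (n-m)
      ≤ (∑ m ∈ Finset.range L, a m) * ∑ l ∈ Finset.range L, b l := by
  have h1 : ∀ n ∈ Finset.range L, ∑ m ∈ Finset.range (n+1), a m * b (n-m)
      = ∑ m ∈ Finset.range L, (if m ≤ n then a m * b (n-m) else 0) := by
    intro n hn
    have hn' := Finset.mem_range.mp hn
    rw [← Finset.sum_filter]
    apply Finset.sum_congr _ (fun _ _ => rfl)
    ext m
    simp only [Finset.mem_range, Finset.mem_filter, Nat.lt_succ_iff]
    omega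
  calc ∑ n ∈ Finset.range L, ∑ m ∈ Finset.range (n+1), a m * b (n-m)
      = ∑ n ∈ Finset.range L, ∑ m ∈ Finset.range L, (if m ≤ n then a m * b (n-m) else 0) :=
        Finset.sum_congr rfl h1
    _ = ∑ m ∈ Finset.range L, ∑ n ∈ Finset.range L, (if m ≤ n then a m * b (n-m) else 0) :=
        Finset.sum_comm
    _ ≤ ∑ m ∈ Finset.range L, a m * ∑ l ∈ Finset.range L, b l := by
        refine Finset.sum_le_sum (fun m hm => ?_)
        have h2 : ∑ n ∈ Finset.range L, (if m ≤ n then a m * b (n-m) else 0)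
            = ∑ n ∈ Finset.Ico m L, a m * b (n-m) := by
          rw [← Finset.sum_filter]
          apply Finset.sum_congr _ (fun _ _ => rfl)
          ext n
          simp only [Finset.mem_range, Finset.mem_filter, Finset.mem_Ico]
          omega
        rw [h2, Finset.sum_Ico_eq_sum_range]
        simp only [Nat.add_sub_cancel_left]
        rw [← Finset.mul_sum]
        exact mul_le_mul_right
          (Finset.sum_le_sum_of_subset (Finset.range_subset_range.mpr (Nat.sub_le L m))) _
    _ = (∑ m ∈ Finset.range L, a m) * ∑ l ∈ Finset.range L, b l := (Finset.sum_mul _ _ _).symm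

lemma GG_le (i j : ℕ) : GG X i j ≤ (if i = j then 1 else 0) + FF X i j * GG X j j := by
  rw [GG, ENNReal.tsum_eq_iSup_nat]
  refine iSup_le (fun L => ?_)
  calc ∑ n ∈ Finset.range L, uu X n i j
      = ∑ n ∈ Finset.range L, ((if n = 0 then (if i = j then 1 else 0) else 0)
          + ∑ m ∈ Finset.range (n+1), fp X m i j * uu X (n-m) j j) := by
        refine Finset.sum_congr rfl (fun n _ => uu_decomp X n i j)
    _ = (∑ n ∈ Finset.range L, (if n = 0 then (if i = j then 1 else 0) else 0))
          + ∑ n ∈ Finset.range L, ∑ m ∈ Finset.range (n+1), fp X m i j * uu X (n-m) j j := by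
        rw [Finset.sum_add_distrib]
    _ ≤ (if i = j then 1 else 0) + (∑ m ∈ Finset.range L, fp X m i j) * ∑ l ∈ Finset.range L, uu X l j j := by
        gcongr
        · calc ∑ n ∈ Finset.range L, (if n = 0 then (if i = j then (1:ℝ≥0∞) else 0) else 0)
              ≤ ∑' n : ℕ, (if n = 0 then (if i = j then (1:ℝ≥0∞) else 0) else 0) :=
                ENNReal.sum_le_tsum _
            _ = (if i = j then 1 else 0) := by
                rw [tsum_eq_single 0 (by intro b hb; simp [hb])]
                simp
        · exact cauchy_finite (fun m => fp X m i j) (fun l => uu X l j j) L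
    _ ≤ (if i = j then 1 else 0) + FF X i j * GG X j j := by
        gcongr
        · exact ENNReal.sum_le_tsum _
        · exact ENNReal.sum_le_tsum _
lemma Bset_meas (j m : ℕ) : MeasurableSet (Bset j m) := by
  have : Bset j m = {ω : ℕ → ℕ | ω (m+1) = j} ∩ ⋂ (l : ℕ), ⋂ (_ : 1 ≤ l ∧ l ≤ m), {ω : ℕ → ℕ | ω l = j}ᶜ := by
    ext ω
    simp only [Bset, Set.mem_inter_iff, Set.mem_setOf_eq, Set.mem_iInter, Set.mem_compl_iff]
    tauto
  rw [this]
  exact (coordSet_meas (m+1) j).inter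
    (MeasurableSet.iInter fun l => MeasurableSet.iInter fun _ => (coordSet_meas l j).compl)

lemma fp_eq_meas (m : ℕ) : ∀ i j, fp X (m+1) i j = X.μ i (Bset j m) := by
  induction m with
  | zero =>
    intro i j
    have hB : Bset j 0 = {ω : ℕ → ℕ | ω 1 = j} := by
      ext ω; simp only [Bset, Set.mem_setOf_eq]
      constructor
      · exact fun h => h.1
      · exact fun h => ⟨h, fun l h1 h0 => by omega⟩
    rw [hB]
    have h1 : X.μ i {ω : ℕ → ℕ | ω 1 = j} = uu X 1 i j := rfl
    have hfp1 : fp X 1 i j = X.P i j := rfl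
    rw [h1, hfp1, uu_succ]
    rw [tsum_eq_single j]
    · simp [uu_zero]
    · intro k hk; simp [uu_zero, hk]
  | succ m ih =>
    intro i j
    have hB : Bset j (m+1) = (fun ω (n : ℕ) => ω (n+1)) ⁻¹' ({σ : ℕ → ℕ | σ 0 = j}ᶜ ∩ Bset j m) := by
      ext ω
      simp only [Bset, Set.mem_preimage, Set.mem_inter_iff, Set.mem_compl_iff, Set.mem_setOf_eq]
      constructor
      · rintro ⟨h1, h2⟩
        refine ⟨h2 1 (by omega) (by omega), h1, fun l hl1 hl2 => h2 (l+1) (by omega) (by omega)⟩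
      · rintro ⟨h0, h1, h2⟩
        refine ⟨h1, fun l hl1 hl2 => ?_⟩
        rcases Nat.exists_eq_add_of_le hl1 with ⟨l', rfl⟩
        cases l' with
        | zero => exact h0
        | succ l'' =>
          have h3 : 1 + (l''+1) = l'' + 1 + 1 := by omega
          rw [h3]
          exact h2 (l''+1) (by omega) (by omega)
    have hmeas : MeasurableSet ({σ : ℕ → ℕ | σ 0 = j}ᶜ ∩ Bset j m) :=
      (coordSet_meas 0 j).compl.inter (Bset_meas j m)
    rw [hB, markov_apply X i hmeas, fp_two]
    apply tsum_congr
    intro k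
    by_cases hk : k = j
    · subst hk
      simp only [if_pos rfl]
      have : X.μ k ({σ : ℕ → ℕ | σ 0 = k}ᶜ ∩ Bset k m) = 0 := by
        refine measure_mono_null (Set.inter_subset_left) ?_
        have := X.prob k
        rw [prob_compl_eq_one_sub (coordSet_meas 0 k), X.start k]
        simp
      rw [this, mul_zero]
      simp
    · rw [if_neg hk, ih k j]
      congr 1
      -- μ k (Cᶜ ∩ B) = μ k B  since a.e. σ 0 = k ≠ j
      have hnull : X.μ k {σ : ℕ → ℕ | σ 0 = k}ᶜ = 0 := by
        have := X.prob k
        rw [prob_compl_eq_one_sub (coordSet_meas 0 k), X.start k]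
        simp
      refine le_antisymm ?_ (measure_mono Set.inter_subset_right)
      calc X.μ k (Bset j m)
          ≤ X.μ k (({σ : ℕ → ℕ | σ 0 = j}ᶜ ∩ Bset j m) ∪ {σ : ℕ → ℕ | σ 0 = k}ᶜ) := by
            apply measure_mono
            intro σ hσ
            by_cases h0 : σ 0 = k
            · left
              exact ⟨by simp only [Set.mem_compl_iff, Set.mem_setOf_eq, h0]; exact hk, hσ⟩
            · right; exact h0
        _ ≤ X.μ k ({σ : ℕ → ℕ | σ 0 = j}ᶜ ∩ Bset j m) + 0 := by
            rw [← hnull]; exact measure_union_le _ _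
        _ = X.μ k ({σ : ℕ → ℕ | σ 0 = j}ᶜ ∩ Bset j m) := add_zero _

lemma Bset_disj (j : ℕ) : Pairwise (Function.onFun Disjoint (Bset j)) := by
  have key : ∀ m m', m < m' → Disjoint (Bset j m) (Bset j m') := by
    intro m m' h
    refine Set.disjoint_left.mpr ?_
    rintro ω ⟨h1, _⟩ ⟨_, h2⟩
    exact h2 (m+1) (by omega) (by omega) h1
  intro m m' hmm
  rcases lt_or_gt_of_ne hmm with h|h
  · exact key m m' h
  · exact (key m' m h).symm

lemma FF_eq (i j : ℕ) : FF X i j = X.μ i (⋃ m, Bset j m) := by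
  rw [measure_iUnion (Bset_disj j) (fun m => Bset_meas j m), FF]
  have hshift : ∑' m, fp X (m+1) i j = ∑' m, fp X m i j := by
    refine Function.Injective.tsum_eq (f := fun m => fp X m i j) Nat.succ_injective ?_
    intro x hx
    rcases Nat.eq_zero_or_pos x with h|h
    · exfalso
      apply hx
      rw [h]
      rfl
    · exact ⟨x - 1, by omega⟩
  rw [← hshift]
  exact tsum_congr (fun m => fp_eq_meas X m i j)

lemma FF_le_one (i j : ℕ) : FF X i j ≤ 1 := by
  rw [FF_eq]
  have := X.prob i
  exact prob_le_one

lemma GG_le_one_add (C : ℝ≥0∞) (hC : ∀ j, GG X j j ≤ C) (i j : ℕ) : GG X i j ≤ 1 + C := by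
  refine (GG_le X i j).trans ?_
  gcongr
  · split <;> simp
  · calc FF X i j * GG X j j ≤ 1 * C := mul_le_mul' (FF_le_one X i j) (hC j)
      _ = C := one_mul C

lemma FF_le_hit (i j N : ℕ) (hjN : j ≤ N) : FF X i j ≤ X.μ i {ω | ∃ n, ω n ≤ N} := by
  rw [FF_eq]
  apply measure_mono
  refine Set.iUnion_subset (fun m ω hω => ?_)
  exact ⟨m+1, le_of_eq_of_le hω.1 hjN⟩
lemma meas_ind (n j : ℕ) : Measurable (fun ω : ℕ → ℕ => if ω n = j then (1:ℝ≥0∞) else 0) :=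
  Measurable.ite (coordSet_meas n j) measurable_const measurable_const

lemma lint_ind (i n j : ℕ) : ∫⁻ ω, (if ω n = j then (1:ℝ≥0∞) else 0) ∂ X.μ i = uu X n i j := by
  have h : ∀ ω : ℕ → ℕ, (if ω n = j then (1:ℝ≥0∞) else 0) = ({ω' : ℕ → ℕ | ω' n = j}).indicator 1 ω := by
    intro ω
    by_cases hω : ω n = j <;> simp [Set.indicator_apply, Set.mem_setOf_eq, hω]
  simp_rw [h]
  rw [lintegral_indicator_one (coordSet_meas n j)]
  rfl

lemma lint_loc (i j : ℕ) : ∫⁻ ω, locTime j ω ∂ X.μ i = GG X i j := by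
  calc ∫⁻ ω, locTime j ω ∂ X.μ i
      = ∑' n, ∫⁻ ω, (if ω n = j then (1:ℝ≥0∞) else 0) ∂ X.μ i := by
        simp_rw [locTime]
        exact lintegral_tsum (fun n => (meas_ind n j).aemeasurable)
    _ = GG X i j := tsum_congr (fun n => lint_ind X i n j)

lemma meas_S (Q : ℕ → ℕ → ℝ≥0∞) : Measurable (fun ω : ℕ → ℕ => ∑' n, dmp Q (ω n)) :=
  Measurable.ennreal_tsum (fun n => (measurable_of_countable (dmp Q)).comp (measurable_pi_apply n))

lemma lint_S (Q : ℕ → ℕ → ℝ≥0∞) (i : ℕ) :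
    ∫⁻ ω, ∑' n, dmp Q (ω n) ∂ X.μ i = ∑' j, dmp Q j * GG X i j := by
  have h1 : ∀ (n : ℕ) (ω : ℕ → ℕ), dmp Q (ω n) = ∑' j, dmp Q j * (if ω n = j then 1 else 0) := by
    intro n ω
    rw [tsum_eq_single (ω n) (fun b hb => by simp [Ne.symm hb, hb])]
    simp
  calc ∫⁻ ω, ∑' n, dmp Q (ω n) ∂ X.μ i
      = ∑' n, ∫⁻ ω, dmp Q (ω n) ∂ X.μ i :=
        lintegral_tsum (fun n => (((measurable_of_countable (dmp Q)).comp
          (measurable_pi_apply n)) : Measurable fun ω : ℕ → ℕ => dmp Q (ω n)).aemeasurable)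
    _ = ∑' n, ∑' j, dmp Q j * uu X n i j := by
        refine tsum_congr (fun n => ?_)
        simp_rw [h1 n]
        rw [lintegral_tsum (fun j => ((meas_ind n j).const_mul _).aemeasurable)]
        refine tsum_congr (fun j => ?_)
        rw [lintegral_const_mul _ (meas_ind n j), lint_ind]
    _ = ∑' j, ∑' n, dmp Q j * uu X n i j := ENNReal.tsum_comm
    _ = ∑' j, dmp Q j * GG X i j := tsum_congr (fun j => ENNReal.tsum_mul_left)

end basic

lemma dmp_le_one (Q : ℕ → ℕ → ℝ≥0∞) (j : ℕ) : dmp Q j ≤ 1 := tsub_le_self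

lemma dmp_le (Q : ℕ → ℕ → ℝ≥0∞) (hpos : ∀ i, 0 < qt Q i) (hfin : ∀ i, qt Q i < ∞) (j : ℕ) :
    dmp Q j ≤ ENNReal.ofReal (max (-(deltaQ Q j)) 0) := by
  by_cases h : 1 ≤ qt Q j
  · have : dmp Q j = 0 := by
      rw [dmp, min_eq_right h, tsub_self]
    rw [this]
    exact zero_le
  · push_neg at h
    set t := (qt Q j).toReal with ht
    have ht0 : 0 < t := ENNReal.toReal_pos (hpos j).ne' (hfin j).ne
    have ht1 : t < 1 := by
      have := (ENNReal.toReal_lt_toReal (hfin j).ne (by simp : (1:ℝ≥0∞) ≠ ∞)).mpr h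
      simpa using this
    have hq : qt Q j = ENNReal.ofReal t := (ENNReal.ofReal_toReal (hfin j).ne).symm
    have hd : dmp Q j = ENNReal.ofReal (1 - t) := by
      rw [dmp, min_eq_left h.le, ENNReal.ofReal_sub _ ht0.le, ENNReal.ofReal_one, hq]
    rw [hd]
    apply ENNReal.ofReal_le_ofReal
    refine le_max_of_le_left ?_
    have := Real.log_le_sub_one_of_pos ht0
    have hdelta : deltaQ Q j = Real.log t := rfl
    rw [hdelta]
    linarith

lemma weier (g : ℕ → ℝ≥0∞) (hg : ∀ n, g n ≤ 1) (t : Finset ℕ) :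
    1 - ∑ n ∈ t, (1 - g n) ≤ ∏ n ∈ t, g n := by
  classical
  induction t using Finset.induction_on with
  | empty => simp
  | @insert a s ha ih =>
    rw [Finset.prod_insert ha, Finset.sum_insert ha, tsub_le_iff_right]
    have h2 : g a ≤ g a * ∏ n ∈ s, g n + ∑ n ∈ s, (1 - g n) := by
      calc g a = g a * 1 := (mul_one _).symm
        _ ≤ g a * ((1 - ∑ n ∈ s, (1 - g n)) + ∑ n ∈ s, (1 - g n)) :=
            mul_le_mul_right le_tsub_add _
        _ = g a * (1 - ∑ n ∈ s, (1 - g n)) + g a * ∑ n ∈ s, (1 - g n) := mul_add _ _ _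
        _ ≤ g a * ∏ n ∈ s, g n + 1 * ∑ n ∈ s, (1 - g n) :=
            add_le_add (mul_le_mul_right ih _) (mul_le_mul_left (hg a) _)
        _ = g a * ∏ n ∈ s, g n + ∑ n ∈ s, (1 - g n) := by rw [one_mul]
    calc (1:ℝ≥0∞) ≤ (1 - g a) + g a := le_tsub_add
      _ ≤ (1 - g a) + (g a * ∏ n ∈ s, g n + ∑ n ∈ s, (1 - g n)) := add_le_add_right h2 _
      _ = g a * ∏ n ∈ s, g n + ((1 - g a) + ∑ n ∈ s, (1 - g n)) := by ring

lemma prod_bound (Q : ℕ → ℕ → ℝ≥0∞) (ω : ℕ → ℕ) (M : ℕ) :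
    (∏ n ∈ Finset.range M, min (qt Q (ω n)) 1) * (1 - ∑' n, dmp Q (ω (n+M)))
      ≤ ∏' n, qt Q (ω n) := by
  set f := fun n => qt Q (ω n) with hf
  by_cases hmul : Multipliable f
  · have hp := hmul.hasProd
    refine ge_of_tendsto hp ?_
    filter_upwards [Filter.eventually_ge_atTop (Finset.range M)] with s hs
    have hsub : Finset.range M ⊆ s := hs
    have hA : ∏ n ∈ Finset.range M, min (qt Q (ω n)) 1 ≤ ∏ n ∈ Finset.range M, f n :=
      Finset.prod_le_prod' (fun n _ => min_le_left _ _)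
    have hge : ∀ n ∈ s \ Finset.range M, M ≤ n := by
      intro n hn
      simp only [Finset.mem_sdiff, Finset.mem_range] at hn
      omega
    have hB : 1 - ∑' n, dmp Q (ω (n+M)) ≤ ∏ n ∈ s \ Finset.range M, f n := by
      calc 1 - ∑' n, dmp Q (ω (n+M))
          ≤ 1 - ∑ n ∈ s \ Finset.range M, dmp Q (ω n) := by
            apply tsub_le_tsub_left
            calc ∑ n ∈ s \ Finset.range M, dmp Q (ω n)
                = ∑ l ∈ (s \ Finset.range M).image (· - M), dmp Q (ω (l + M)) := by
                  rw [Finset.sum_image]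
                  · refine Finset.sum_congr rfl (fun n hn => ?_)
                    rw [Nat.sub_add_cancel (hge n hn)]
                  · intro x hx y hy hxy
                    have hx' := hge x hx; have hy' := hge y hy
                    simp only at hxy; omega
              _ ≤ ∑' l, dmp Q (ω (l + M)) := ENNReal.sum_le_tsum _
        _ ≤ ∏ n ∈ s \ Finset.range M, min (f n) 1 :=
            weier (fun n => min (f n) 1) (fun n => min_le_right _ _) (s \ Finset.range M)
        _ ≤ ∏ n ∈ s \ Finset.range M, f n := Finset.prod_le_prod' (fun n _ => min_le_left _ _)
    calc (∏ n ∈ Finset.range M, min (qt Q (ω n)) 1) * (1 - ∑' n, dmp Q (ω (n+M)))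
        ≤ (∏ n ∈ Finset.range M, f n) * ∏ n ∈ s \ Finset.range M, f n := mul_le_mul' hA hB
      _ = ∏ n ∈ s, f n := by rw [mul_comm, Finset.prod_sdiff hsub]
  · rw [tprod_eq_one_of_not_multipliable hmul]
    calc (∏ n ∈ Finset.range M, min (qt Q (ω n)) 1) * (1 - ∑' n, dmp Q (ω (n+M)))
        ≤ 1 * 1 := by
          refine mul_le_mul' ?_ tsub_le_self
          calc ∏ n ∈ Finset.range M, min (qt Q (ω n)) 1
              ≤ ∏ n ∈ Finset.range M, 1 := Finset.prod_le_prod' (fun n _ => min_le_right _ _)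
            _ = 1 := Finset.prod_const_one
      _ = 1 := mul_one _

set_option maxHeartbeats 2000000 in
theorem stmt2 (Q : ℕ → ℕ → ℝ≥0∞) (X : MC)
    (hpos : ∀ i, 0 < qt Q i) (hfin : ∀ i, qt Q i < ∞)
    (hirr : Irred Q)
    (hP : ∀ i j, X.P i j = Q i j / qt Q i)
    (hδm : Summable fun i => max (-(deltaQ Q i)) 0)
    (hlln : ∀ N : ℕ, Tendsto (fun i => X.μ i {ω | ∀ n, N < ω n}) atTop (𝓝 1))
    (hloc : (⨆ i, ∫⁻ ω, locTime i ω ∂(X.μ i)) < ∞) :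
    1 ≤ Filter.atTop.liminf (fun i => fQ Q X i) ∧ 0 < ⨅ i, fQ Q X i := by
  classical
  set C := ⨆ i, ∫⁻ ω, locTime i ω ∂(X.μ i) with hC
  have hGC : ∀ j, GG X j j ≤ C := fun j =>
    (lint_loc X j j).symm.le.trans (le_iSup (fun i => ∫⁻ ω, locTime i ω ∂(X.μ i)) j)
  have hCfin : C ≠ ∞ := hloc.ne
  have h1C : (1 + C) ≠ ∞ := ENNReal.add_ne_top.mpr ⟨ENNReal.one_ne_top, hCfin⟩
  set d := fun j => ENNReal.ofReal (max (-(deltaQ Q j)) 0) with hdd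
  have hdsum : ∑' j, d j ≠ ∞ := by
    have h := ENNReal.ofReal_tsum_of_nonneg (fun j => le_max_right (-(deltaQ Q j)) 0) hδm
    simp only [hdd]
    rw [← h]
    exact ENNReal.ofReal_ne_top
  set T := fun i => ∑' j, dmp Q j * GG X i j with hT
  -- Key lower bound : 1 - T i ≤ fQ Q X i
  have hkey : ∀ i, 1 - T i ≤ fQ Q X i := by
    intro i
    have := X.prob i
    have hptw : ∀ ω : ℕ → ℕ, 1 - ∑' n, dmp Q (ω n) ≤ ∏' n, qt Q (ω n) := by
      intro ω
      have h := prod_bound Q ω 0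
      simpa using h
    have h1 : (1:ℝ≥0∞) ≤ (∫⁻ ω, (1 - ∑' n, dmp Q (ω n)) ∂ X.μ i)
        + ∫⁻ ω, (∑' n, dmp Q (ω n)) ∂ X.μ i := by
      rw [← lintegral_add_right _ (meas_S Q)]
      calc (1:ℝ≥0∞) = ∫⁻ _, 1 ∂ X.μ i := by rw [lintegral_one, measure_univ]
        _ ≤ _ := lintegral_mono (fun ω => le_tsub_add)
    have h2 : 1 - T i ≤ ∫⁻ ω, (1 - ∑' n, dmp Q (ω n)) ∂ X.μ i := by
      simp only [hT]
      rw [← lint_S X Q i]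
      exact tsub_le_iff_right.mpr h1
    exact h2.trans (lintegral_mono hptw)
  -- tail bound of T
  have htailT : ∀ i N, ∑' l, dmp Q (l+N) * GG X i (l+N) ≤ (1+C) * ∑' l, d (l+N) := by
    intro i N
    calc ∑' l, dmp Q (l+N) * GG X i (l+N)
        ≤ ∑' l, d (l+N) * (1+C) :=
          ENNReal.tsum_le_tsum (fun l =>
            mul_le_mul' (dmp_le Q hpos hfin (l+N)) (GG_le_one_add X C hGC i (l+N)))
      _ = (1+C) * ∑' l, d (l+N) := by rw [ENNReal.tsum_mul_right, mul_comm]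
  have hTfin : ∀ i, T i ≠ ∞ := by
    intro i
    have : T i ≤ (1+C) * ∑' l, d (l+0) := by
      have h := htailT i 0
      simpa using h
    refine (this.trans_lt ?_).ne
    exact ENNReal.mul_lt_top h1C.lt_top (by simpa using hdsum.lt_top)
  -- MAIN eventual bound
  have key : ∀ b : ℝ≥0∞, b < 1 → ∀ᶠ i in atTop, b < fQ Q X i := by
    intro b hb
    have hbfin : b ≠ ∞ := (hb.trans_le le_top).ne
    set η := 1 - b with hηdef
    have hη0 : η ≠ 0 := (tsub_pos_of_lt hb).ne'
    have hηfin : η ≠ ∞ := (tsub_le_self.trans_lt (lt_top_iff_ne_top.mpr ENNReal.one_ne_top)).ne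
    have hη20 : η / 2 ≠ 0 := by
      simp [ENNReal.div_eq_zero_iff, hη0]
    have hη2fin : η / 2 ≠ ∞ := by
      simp [ENNReal.div_eq_top, hηfin]
    have hη40 : 0 < η / 2 / 2 := by
      refine ENNReal.div_pos hη20 (by norm_num)
    -- pick N
    have htail := ENNReal.tendsto_sum_nat_add d hdsum
    have htail2 : Tendsto (fun N => (1 + C) * ∑' l, d (l + N)) atTop (𝓝 0) := by
      have h := ENNReal.Tendsto.const_mul htail (Or.inr h1C)
      simpa using h
    obtain ⟨N, hN⟩ := (htail2.eventually_lt_const hη40).exists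
    -- pick θ
    set K := (N:ℝ≥0∞) * C + 1 with hK
    have hK0 : K ≠ 0 := by simp [hK]
    have hKfin : K ≠ ∞ := by
      refine ENNReal.add_ne_top.mpr ⟨?_, ENNReal.one_ne_top⟩
      exact ENNReal.mul_ne_top (by simp) hCfin
    set θ := (η/2/2) / K with hθdef
    have hθ0 : θ ≠ 0 := (ENNReal.div_pos hη40.ne' hKfin).ne'
    have hθ1 : θ ≤ 1 := by
      have h1 : θ ≤ η/2/2 := by
        rw [hθdef, ENNReal.div_eq_inv_mul, mul_comm]
        calc (η/2/2) * K⁻¹ ≤ (η/2/2) * 1 := by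
              refine mul_le_mul_right (ENNReal.inv_le_one.mpr le_add_self) _
          _ = η/2/2 := mul_one _
      refine h1.trans ?_
      calc η/2/2 ≤ η := by
            refine (ENNReal.half_le_self).trans ENNReal.half_le_self
        _ ≤ 1 := tsub_le_self
    have hKθ : K * θ = η/2/2 := ENNReal.mul_div_cancel hK0 hKfin
    -- events
    have hAmeas : MeasurableSet {ω : ℕ → ℕ | ∀ n, N < ω n} := by
      have : {ω : ℕ → ℕ | ∀ n, N < ω n} = ⋂ n, (fun ω : ℕ → ℕ => ω n) ⁻¹' {k | N < k} := by
        ext ω; simp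
      rw [this]
      exact MeasurableSet.iInter (fun n => (measurable_pi_apply n) (by trivial))
    have hcompl : ∀ i, X.μ i {ω | ∃ n, ω n ≤ N} = 1 - X.μ i {ω | ∀ n, N < ω n} := by
      intro i
      have := X.prob i
      have hset : {ω : ℕ → ℕ | ∃ n, ω n ≤ N} = {ω : ℕ → ℕ | ∀ n, N < ω n}ᶜ := by
        ext ω; simp [not_forall, not_lt]
      rw [hset, prob_compl_eq_one_sub hAmeas]
    have hev1 : ∀ᶠ i in atTop, 1 - θ < X.μ i {ω | ∀ n, N < ω n} := by
      refine (hlln N).eventually_const_lt ?_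
      exact ENNReal.sub_lt_self ENNReal.one_ne_top one_ne_zero hθ0
    filter_upwards [hev1, eventually_gt_atTop N] with i hi1 hi2
    -- ε i ≤ θ
    have hεθ : X.μ i {ω | ∃ n, ω n ≤ N} ≤ θ := by
      rw [hcompl i]
      calc 1 - X.μ i {ω | ∀ n, N < ω n} ≤ 1 - (1 - θ) := tsub_le_tsub_left hi1.le 1
        _ = θ := ENNReal.sub_sub_cancel ENNReal.one_ne_top hθ1
    -- head bound
    have hhead : ∑ j ∈ Finset.range N, dmp Q j * GG X i j ≤ (N:ℝ≥0∞) * C * θ := by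
      have hterm : ∀ j ∈ Finset.range N, dmp Q j * GG X i j ≤ C * θ := by
        intro j hj
        have hjN : j ≤ N := le_of_lt (Finset.mem_range.mp hj)
        have hij : i ≠ j := by
          have := Finset.mem_range.mp hj; omega
        have hG : GG X i j ≤ FF X i j * GG X j j := by
          have h := GG_le X i j
          rwa [if_neg hij, zero_add] at h
        calc dmp Q j * GG X i j ≤ 1 * (FF X i j * GG X j j) :=
              mul_le_mul' (dmp_le_one Q j) hG
          _ = FF X i j * GG X j j := one_mul _
          _ ≤ θ * C := mul_le_mul' ((FF_le_hit X i j N hjN).trans hεθ) (hGC j)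
          _ = C * θ := mul_comm _ _
      calc ∑ j ∈ Finset.range N, dmp Q j * GG X i j
          ≤ ∑ _j ∈ Finset.range N, C * θ := Finset.sum_le_sum hterm
        _ = (N:ℝ≥0∞) * C * θ := by
            rw [Finset.sum_const, Finset.card_range, nsmul_eq_mul, mul_assoc]
    -- split T
    have hsplit : T i = ∑ j ∈ Finset.range N, dmp Q j * GG X i j
        + ∑' l, dmp Q (l+N) * GG X i (l+N) := by
      simp only [hT]
      have hs : HasSum (fun l : ℕ => (fun j => dmp Q j * GG X i j) (l + N))
          (∑' l, dmp Q (l+N) * GG X i (l+N)) := ENNReal.summable.hasSum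
      exact (HasSum.sum_range_add (f := fun j => dmp Q j * GG X i j) (k := N) hs).tsum_eq
    have hTi : T i ≤ η / 2 := by
      rw [hsplit]
      calc ∑ j ∈ Finset.range N, dmp Q j * GG X i j + ∑' l, dmp Q (l+N) * GG X i (l+N)
          ≤ (N:ℝ≥0∞) * C * θ + (1+C) * ∑' l, d (l+N) := add_le_add hhead (htailT i N)
        _ ≤ η/2/2 + η/2/2 := by
            refine add_le_add ?_ hN.le
            calc (N:ℝ≥0∞) * C * θ ≤ K * θ := mul_le_mul_left le_self_add _
              _ = η/2/2 := hKθ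
        _ = η/2 := ENNReal.add_halves _
    -- conclude
    have hb1 : b + T i < 1 := by
      have h1 : b + T i ≤ b + η/2 := add_le_add_right hTi b
      have h2 : b + η/2 < b + η := by
        exact ENNReal.add_lt_add_left hbfin (ENNReal.half_lt_self hη0 hηfin)
      have h3 : b + η = 1 := add_tsub_cancel_of_le hb.le
      exact h1.trans_lt (h3 ▸ h2)
    have : b < 1 - T i := lt_tsub_iff_right.mpr hb1
    exact this.trans_le (hkey i)
  have part1 : 1 ≤ Filter.atTop.liminf (fun i => fQ Q X i) := by
    rw [le_liminf_iff]
    intro y hy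
    exact key y hy
  refine ⟨part1, ?_⟩
  -- positivity of each fQ i
  have hfQpos : ∀ i, 0 < fQ Q X i := by
    intro i
    have hprob := X.prob i
    have hSfin : ∫⁻ ω, (∑' n, dmp Q (ω n)) ∂ X.μ i ≠ ∞ := by
      rw [lint_S X Q i]
      exact hTfin i
    have hae : ∀ᵐ ω ∂ X.μ i, (∑' n, dmp Q (ω n)) < ∞ := ae_lt_top (meas_S Q) hSfin
    set E := fun M => {ω : ℕ → ℕ | (∑' n, dmp Q (ω (n+M))) < 1} with hE
    have htmono : ∀ (ω : ℕ → ℕ) (M M' : ℕ), M ≤ M' →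
        (∑' n, dmp Q (ω (n+M'))) ≤ ∑' n, dmp Q (ω (n+M)) := by
      intro ω M M' h
      obtain ⟨k, rfl⟩ := Nat.exists_eq_add_of_le h
      calc ∑' n, dmp Q (ω (n+(M+k)))
          = ∑' n, (fun m => dmp Q (ω (m+M))) (n+k) := by
            refine tsum_congr (fun n => ?_)
            simp only
            congr 2
            omega
        _ ≤ ∑' m, dmp Q (ω (m+M)) :=
            ENNReal.tsum_comp_le_tsum_of_injective (add_left_injective k) _
    have hEmeas : ∀ M, MeasurableSet (E M) := by
      intro M
      have hm : Measurable fun ω : ℕ → ℕ => ∑' n, dmp Q (ω (n+M)) :=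
        Measurable.ennreal_tsum (fun n => (((measurable_of_countable (dmp Q)).comp
          (measurable_pi_apply (n+M))) : Measurable fun ω : ℕ → ℕ => dmp Q (ω (n+M))))
      exact measurableSet_lt hm measurable_const
    have hEmono : Monotone E := by
      intro M M' h ω hω
      exact lt_of_le_of_lt (htmono ω M M' h) hω
    have hcov : ∀ᵐ ω ∂ X.μ i, ω ∈ ⋃ M, E M := by
      filter_upwards [hae] with ω hω
      have htend := ENNReal.tendsto_sum_nat_add (fun n => dmp Q (ω n)) hω.ne
      have := (htend.eventually_lt_const (by norm_num : (0:ℝ≥0∞) < 1)).exists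
      obtain ⟨M, hM⟩ := this
      exact Set.mem_iUnion.mpr ⟨M, hM⟩
    have hU1 : X.μ i (⋃ M, E M) = 1 := by
      have hc : X.μ i (⋃ M, E M)ᶜ = 0 := ae_iff.mp hcov
      have := prob_compl_eq_one_sub (μ := X.μ i) (MeasurableSet.iUnion hEmeas).compl
      rw [compl_compl, hc] at this
      simpa using this
    have htendU : Tendsto (fun M => X.μ i (E M)) atTop (𝓝 1) := by
      have h := tendsto_measure_iUnion_atTop (μ := X.μ i) hEmono
      rw [hU1] at h
      exact h
    obtain ⟨M, hM⟩ := (htendU.eventually_const_lt (by norm_num : (0:ℝ≥0∞) < 1)).exists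
    -- lower bound function g
    set g := fun ω : ℕ → ℕ => (∏ n ∈ Finset.range M, min (qt Q (ω n)) 1)
      * (1 - ∑' n, dmp Q (ω (n+M))) with hgdef
    have hg1 : Measurable fun ω : ℕ → ℕ => ∏ n ∈ Finset.range M, min (qt Q (ω n)) 1 := by
      refine Finset.measurable_prod _ (fun n _ => ?_)
      exact (((measurable_of_countable (fun k => min (qt Q k) 1)).comp
        (measurable_pi_apply n)) : Measurable fun ω : ℕ → ℕ => min (qt Q (ω n)) 1)
    have hg2 : Measurable fun ω : ℕ → ℕ => ∑' n, dmp Q (ω (n+M)) :=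
      Measurable.ennreal_tsum (fun n => (((measurable_of_countable (dmp Q)).comp
        (measurable_pi_apply (n+M))) : Measurable fun ω : ℕ → ℕ => dmp Q (ω (n+M))))
    have hgmeas : Measurable g := hg1.mul (measurable_const.sub hg2)
    have hgpos : ∀ ω ∈ E M, 0 < g ω := by
      intro ω hω
      refine ENNReal.mul_pos ?_ ?_
      · refine (CanonicallyOrderedAdd.prod_pos.mpr (fun n _ => ?_)).ne'
        exact lt_min (hpos (ω n)) zero_lt_one
      · exact (tsub_pos_of_lt hω).ne'
    have hint : 0 < ∫⁻ ω, g ω ∂ X.μ i := by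
      rw [pos_iff_ne_zero]
      intro h0
      have hg0 := (lintegral_eq_zero_iff hgmeas).mp h0
      have : X.μ i {ω | ¬ g ω = 0} = 0 := by
        rw [← ae_iff]
        exact hg0
      have hsub : E M ⊆ {ω | ¬ g ω = 0} := fun ω hω => (hgpos ω hω).ne'
      have := measure_mono_null hsub this
      rw [this] at hM
      exact absurd hM (lt_irrefl 0)
    refine hint.trans_le ?_
    exact lintegral_mono (fun ω => prod_bound Q ω M)
  -- infimum positive
  obtain ⟨M₀, hM₀⟩ := Filter.eventually_atTop.mp (key (1/2) (by norm_num))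
  set ε := min (1/2 : ℝ≥0∞) ((Finset.range M₀).inf fun i => fQ Q X i) with hε
  have hε0 : 0 < ε := by
    refine lt_min (by norm_num) ?_
    refine (Finset.lt_inf_iff (by norm_num : (0:ℝ≥0∞) < ⊤)).mpr ?_
    intro j _
    exact hfQpos j
  refine lt_of_lt_of_le hε0 (le_iInf ?_)
  intro i
  by_cases h : i < M₀
  · exact (min_le_right _ _).trans (Finset.inf_le (Finset.mem_range.mpr h))
  · push_neg at h
    exact (min_le_left _ _).trans (hM₀ i h).le
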